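/- arXiv:math/0502037 — 4 statements merged into one kernel-verified Lean document; each statement's English description precedes it below -/
import Mathlib

section
/- The map Z : P_{n,1} → Z_n associating to each monic degree-n complex polynomial the multiset of its roots (with multiplicity) is a homeomorphism between (P_{n,1}, d_po) and (Z_n, d_F). -/
open Polynomial



/-- coefficients of products of linear factors are continuous in the roots -/
lemma contCoeff {ι : Type*} [DecidableEq ι] (s : Finset ι) :
    ∀ k, Continuous fun v : ι → ℂ => (∏ j ∈ s, (X - C (v j))).coeff k := by
  induction s using Finset.induction_on with
  | empty => intro k; simp only [Finset.prod_empty]; exact continuous_const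
  | @insert a s ha ih =>
    intro k
    have hrw : (fun v : ι → ℂ => (∏ j ∈ insert a s, (X - C (v j))).coeff k)
        = fun v => (if k = 0 then 0 else (∏ j ∈ s, (X - C (v j))).coeff (k-1))
            - v a * (∏ j ∈ s, (X - C (v j))).coeff k := by
      funext v
      rw [Finset.prod_insert ha, sub_mul, coeff_sub, coeff_C_mul]
      cases k with
      | zero => simp [mul_coeff_zero]
      | succ m => simp [coeff_X_mul]
    rw [hrw]
    apply Continuous.sub
    · split
      · exact continuous_const
      · exact ih _
    · exact (continuous_apply a).mul (ih k)

lemma prod_eq_multiset (n : ℕ) (v : Fin n → ℂ) :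
    (∏ j, (X - C (v j))) = ((↑(List.ofFn v) : Multiset ℂ).map fun a => X - C a).prod := by
  simp only [← Multiset.prod_coe, Multiset.map_coe, List.map_ofFn, ← List.prod_ofFn]
  rfl

lemma dist_comp_perm_le {n : ℕ} (f g : Fin n → ℂ) (σ : Equiv.Perm (Fin n)) :
    dist (f ∘ σ) (g ∘ σ) ≤ dist f g :=
  (dist_pi_le_iff dist_nonneg).2 fun i => dist_le_pi_dist f g (σ i)

lemma dist_comp_perm {n : ℕ} (f g : Fin n → ℂ) (σ : Equiv.Perm (Fin n)) :
    dist (f ∘ σ) (g ∘ σ) = dist f g := by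
  refine le_antisymm (dist_comp_perm_le f g σ) ?_
  have h := dist_comp_perm_le (f ∘ σ) (g ∘ σ) σ.symm
  have h1 : (f ∘ σ) ∘ σ.symm = f := by funext i; simp
  have h2 : (g ∘ σ) ∘ σ.symm = g := by funext i; simp
  rwa [h1, h2] at h

lemma exists_eq_comp_perm : ∀ {n : ℕ} (u v : Fin n → ℂ),
    (List.ofFn u).Perm (List.ofFn v) → ∃ σ : Equiv.Perm (Fin n), u = v ∘ σ := by
  intro n
  induction n with
  | zero => exact fun u v _ => ⟨Equiv.refl _, funext fun i => i.elim0⟩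
  | succ n ih =>
    intro u v h
    have hmem : u 0 ∈ List.ofFn v := h.mem_iff.mp (by simp [List.mem_ofFn])
    rw [List.mem_ofFn] at hmem
    obtain ⟨i, hi⟩ := hmem
    set w : Fin (n+1) → ℂ := v ∘ (Equiv.swap 0 i) with hw
    have hw0 : w 0 = u 0 := by simp [hw, Equiv.swap_apply_left, hi]
    have hperm : (List.ofFn u).Perm (List.ofFn w) :=
      h.trans (Equiv.Perm.ofFn_comp_perm (Equiv.swap 0 i) v).symm
    have hcons : (u 0 :: List.ofFn (fun k : Fin n => u k.succ)).Perm
        (u 0 :: List.ofFn (fun k : Fin n => w k.succ)) := by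
      have := hperm
      rw [List.ofFn_succ, List.ofFn_succ, hw0] at this
      exact this
    obtain ⟨τ, hτ⟩ := ih _ _ hcons.cons_inv
    refine ⟨(((finSuccEquiv n).symm.permCongr) (Equiv.optionCongr τ)).trans (Equiv.swap 0 i), ?_⟩
    funext j
    refine Fin.cases ?_ ?_ j
    · simpa [Equiv.permCongr_apply, hi] using hw0.symm
    · intro k
      have hk := congrFun hτ k
      simp only [Function.comp_apply] at hk
      simpa [Equiv.permCongr_apply, hw] using hk

/-- Cauchy bound -/
lemma root_bound {n : ℕ} (hn : 1 ≤ n) {q : ℂ[X]} (hq : q.Monic) (hd : q.natDegree = n)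
    {z : ℂ} (hz : q.eval z = 0) : ‖z‖ ≤ 1 + ∑ j : Fin n, ‖q.coeff j‖ := by
  have hS0 : (0:ℝ) ≤ ∑ j : Fin n, ‖q.coeff j‖ :=
    Finset.sum_nonneg fun j _ => norm_nonneg _
  by_cases h1 : ‖z‖ ≤ 1
  · linarith
  push_neg at h1
  have heval : (0:ℂ) = ∑ i ∈ Finset.range n, q.coeff i * z ^ i + z ^ n := by
    rw [← hz, eval_eq_sum_range, hd, Finset.sum_range_succ]
    congr 1
    rw [← hd, hq.coeff_natDegree, one_mul, hd]
  have hzn : z ^ n = -∑ i ∈ Finset.range n, q.coeff i * z ^ i := by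
    rw [eq_neg_iff_add_eq_zero]; linear_combination -heval
  have hnorm : ‖z‖ ^ n ≤ (∑ i ∈ Finset.range n, ‖q.coeff i‖) * ‖z‖ ^ (n - 1) := by
    calc ‖z‖ ^ n = ‖z ^ n‖ := (norm_pow z n).symm
      _ = ‖∑ i ∈ Finset.range n, q.coeff i * z ^ i‖ := by rw [hzn, norm_neg]
      _ ≤ ∑ i ∈ Finset.range n, ‖q.coeff i * z ^ i‖ := norm_sum_le _ _
      _ ≤ ∑ i ∈ Finset.range n, ‖q.coeff i‖ * ‖z‖ ^ (n - 1) := by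
          refine Finset.sum_le_sum fun i hi => ?_
          rw [norm_mul, norm_pow]
          refine mul_le_mul_of_nonneg_left ?_ (norm_nonneg _)
          have hi' : i < n := Finset.mem_range.mp hi
          exact pow_le_pow_right₀ h1.le (by omega : i ≤ n - 1)
      _ = (∑ i ∈ Finset.range n, ‖q.coeff i‖) * ‖z‖ ^ (n - 1) := by rw [Finset.sum_mul]
  have hzpos : (0:ℝ) < ‖z‖ ^ (n - 1) := pow_pos (by linarith) _
  have hzn' : ‖z‖ ^ n = ‖z‖ * ‖z‖ ^ (n - 1) := by
    rw [← pow_succ']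
    congr 1
    omega
  rw [hzn'] at hnorm
  have : ‖z‖ ≤ ∑ i ∈ Finset.range n, ‖q.coeff i‖ := le_of_mul_le_mul_right (by linarith) hzpos
  calc ‖z‖ ≤ ∑ i ∈ Finset.range n, ‖q.coeff i‖ := this
    _ = ∑ j : Fin n, ‖q.coeff j‖ := by
        rw [← Fin.sum_univ_eq_sum_range]
    _ ≤ 1 + ∑ j : Fin n, ‖q.coeff j‖ := by linarith

lemma monic_ext {n : ℕ} {p q : ℂ[X]} (hp : p.Monic) (hq : q.Monic)
    (hdp : p.natDegree = n) (hdq : q.natDegree = n)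
    (h : ∀ j : Fin n, p.coeff j = q.coeff j) : p = q := by
  ext k
  rcases lt_trichotomy k n with hk | hk | hk
  · exact h ⟨k, hk⟩
  · subst hk
    rw [← hdp, hp.coeff_natDegree, hdp, ← hdq, hq.coeff_natDegree]
  · rw [coeff_eq_zero_of_natDegree_lt (by omega), coeff_eq_zero_of_natDegree_lt (by omega)]

lemma multiset_exists_ofFn (n : ℕ) (s : Multiset ℂ) (h : Multiset.card s = n) :
    ∃ w : Fin n → ℂ, (↑(List.ofFn w) : Multiset ℂ) = s := by
  obtain ⟨l, rfl⟩ := Quotient.exists_rep s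
  have hl : l.length = n := h
  refine ⟨fun i => l.get (Fin.cast hl.symm i), ?_⟩
  congr 1
  apply List.ext_get
  · simp [hl]
  · intro i h1 h2
    simp


/-- The distance `d_F` on representatives of `n`-element multisets of complex numbers:
`dF u v = min over permutations σ of (sup metric distance between u and v ∘ σ)`. -/
noncomputable def dF {n : ℕ} (u v : Fin n → ℂ) : ℝ :=
  ⨅ σ : Equiv.Perm (Fin n), dist u (v ∘ σ)

/-- The metric `d_po` on monic complex polynomials of degree `n`: the maximum of the
absolute values of the differences of the coefficients of degree `< n`. -/
noncomputable def dpo (n : ℕ) (f g : Polynomial ℂ) : ℝ :=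
  ⨆ j : Fin n, ‖f.coeff j - g.coeff j‖

lemma dF_le {n : ℕ} (u v : Fin n → ℂ) (σ : Equiv.Perm (Fin n)) :
    dF u v ≤ dist u (v ∘ σ) := by
  apply ciInf_le (f := fun σ : Equiv.Perm (Fin n) => dist u (v ∘ σ))
  exact Set.Finite.bddBelow (Set.finite_range _)

lemma dF_lt_exists {n : ℕ} {u v : Fin n → ℂ} {δ : ℝ} (h : dF u v < δ) :
    ∃ σ : Equiv.Perm (Fin n), dist u (v ∘ σ) < δ :=
  exists_lt_of_ciInf_lt h

lemma dpo_coeff_le (n : ℕ) (hn : 1 ≤ n) (p q : Polynomial ℂ) (j : Fin n) :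
    ‖p.coeff j - q.coeff j‖ ≤ dpo n p q := by
  haveI : Nonempty (Fin n) := ⟨⟨0, hn⟩⟩
  apply le_ciSup (f := fun j : Fin n => ‖p.coeff j - q.coeff j‖)
  exact Set.Finite.bddAbove (Set.finite_range _)

lemma dpo_nonneg (n : ℕ) (p q : Polynomial ℂ) : 0 ≤ dpo n p q :=
  Real.iSup_nonneg fun _ => norm_nonneg _

lemma dpo_eq_zero_coeff {n : ℕ} (hn : 1 ≤ n) {p q : Polynomial ℂ} (h : dpo n p q = 0)
    (j : Fin n) : p.coeff j = q.coeff j := by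
  have h1 := dpo_coeff_le n hn p q j
  rw [h] at h1
  have h2 := norm_nonneg (p.coeff j - q.coeff j)
  have h3 := le_antisymm h1 h2
  rwa [norm_eq_zero, sub_eq_zero] at h3

lemma dpo_le_of_forall {n : ℕ} (hn : 1 ≤ n) {p q : Polynomial ℂ} {ε : ℝ}
    (h : ∀ j : Fin n, ‖p.coeff j - q.coeff j‖ ≤ ε) : dpo n p q ≤ ε := by
  haveI : Nonempty (Fin n) := ⟨⟨0, hn⟩⟩
  exact ciSup_le h

lemma continuous_ciSup_fin {X : Type*} [TopologicalSpace X] {ι : Type*} [Fintype ι] [Nonempty ι]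
    (F : ι → X → ℝ) (hF : ∀ i, Continuous (F i)) : Continuous fun x => ⨆ i, F i x := by
  have heq : (fun x => ⨆ i, F i x)
      = fun x => Finset.univ.sup' Finset.univ_nonempty (fun i => F i x) := by
    funext x; rw [Finset.sup'_univ_eq_ciSup]
  rw [heq, continuous_iff_continuousAt]
  exact fun x => ContinuousAt.finset_sup'_apply _ fun i _ => (hF i).continuousAt

lemma dpo_continuous {n : ℕ} (hn : 1 ≤ n) (p : Polynomial ℂ) :
    Continuous fun v : Fin n → ℂ => dpo n p (∏ j, (X - C (v j))) := by
  haveI : Nonempty (Fin n) := ⟨⟨0, hn⟩⟩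
  simp only [dpo]
  exact continuous_ciSup_fin _ fun j =>
    continuous_norm.comp (continuous_const.sub (contCoeff Finset.univ (j : ℕ)))

/-- The root map `Z : P_{n,1} → Z_n` is a homeomorphism between `(P_{n,1}, d_po)`
and `(Z_n, d_F)`: it is a bijection (each `n`-element multiset is the root multiset
of a unique monic degree-`n` polynomial), `Z` is continuous, and its inverse `Φ` is
continuous. -/
theorem stmt13 (n : ℕ) (hn : 1 ≤ n) :
    (∀ V : Multiset ℂ, Multiset.card V = n →
      ∃! p : Polynomial ℂ, p.Monic ∧ p.natDegree = n ∧ p.roots = V) ∧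
    (∀ p : Polynomial ℂ, p.Monic → p.natDegree = n → ∀ ε > (0:ℝ), ∃ δ > (0:ℝ),
      ∀ q : Polynomial ℂ, q.Monic → q.natDegree = n → dpo n p q < δ →
        ∀ u v : Fin n → ℂ,
          (↑(List.ofFn u) : Multiset ℂ) = p.roots →
          (↑(List.ofFn v) : Multiset ℂ) = q.roots → dF u v < ε) ∧
    (∀ u : Fin n → ℂ, ∀ ε > (0:ℝ), ∃ δ > (0:ℝ), ∀ v : Fin n → ℂ, dF u v < δ →
      dpo n (∏ j, (X - C (u j))) (∏ j, (X - C (v j))) < ε) := by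
  haveI : Nonempty (Fin n) := ⟨⟨0, hn⟩⟩
  have hmonicΦ : ∀ v : Fin n → ℂ, (∏ j, (X - C (v j))).Monic := fun v =>
    monic_prod_of_monic _ _ fun j _ => monic_X_sub_C _
  have hdegΦ : ∀ v : Fin n → ℂ, (∏ j, (X - C (v j))).natDegree = n := fun v => by
    rw [prod_eq_multiset, natDegree_multiset_prod_X_sub_C_eq_card]; simp
  have hrootsΦ : ∀ v : Fin n → ℂ, (∏ j, (X - C (v j))).roots = ↑(List.ofFn v) := fun v => by
    rw [prod_eq_multiset, roots_multiset_prod_X_sub_C]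
  refine ⟨?_, ?_, ?_⟩
  · -- Part 1: bijection
    intro V hV
    refine ⟨(V.map fun a => X - C a).prod,
      ⟨monic_multiset_prod_of_monic _ _ fun a _ => monic_X_sub_C a,
       (natDegree_multiset_prod_X_sub_C_eq_card V).trans hV,
       roots_multiset_prod_X_sub_C V⟩, ?_⟩
    rintro q ⟨hq, _, hrq⟩
    have := (IsAlgClosed.splits q).eq_prod_roots_of_monic hq
    rwa [hrq] at this
  · -- Part 2: continuity of the root map
    intro p hp hd ε hε
    have hsplit : Splits p := IsAlgClosed.splits p
    have hcard : Multiset.card p.roots = n := (splits_iff_card_roots.mp hsplit).trans hd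
    obtain ⟨u₀, hu₀⟩ := multiset_exists_ofFn n p.roots hcard
    set A := ∑ j : Fin n, ‖p.coeff j‖ with hA
    set R := A + n + 1 with hR
    set K : Set (Fin n → ℂ) := Set.univ.pi (fun _ => Metric.closedBall (0:ℂ) R) with hK
    have hKc : IsCompact K := isCompact_univ_pi fun _ => isCompact_closedBall _ _
    set S : Set (Fin n → ℂ) :=
      K ∩ ⋂ σ : Equiv.Perm (Fin n), {v | ε ≤ dist u₀ (v ∘ σ)} with hS
    have hSc : IsCompact S := hKc.inter_right (isClosed_iInter fun σ =>
      isClosed_le continuous_const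
        (Continuous.dist continuous_const (continuous_pi fun i => continuous_apply (σ i))))
    have hfc : Continuous fun v : Fin n → ℂ => dpo n p (∏ j, (X - C (v j))) :=
      dpo_continuous hn p
    have hfpos : ∀ v ∈ S, 0 < dpo n p (∏ j, (X - C (v j))) := by
      intro v hv
      rcases (dpo_nonneg n p (∏ j, (X - C (v j)))).lt_or_eq with hlt | heq
      · exact hlt
      exfalso
      have hpv : p = ∏ i, (X - C (v i)) :=
        monic_ext hp (hmonicΦ v) hd (hdegΦ v) (dpo_eq_zero_coeff hn heq.symm)
      have hmeq : (↑(List.ofFn u₀) : Multiset ℂ) = ↑(List.ofFn v) := by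
        rw [hu₀, hpv, hrootsΦ]
      obtain ⟨σ, hσ⟩ := exists_eq_comp_perm u₀ v (Multiset.coe_eq_coe.mp hmeq)
      have hvS := hv.2
      rw [Set.mem_iInter] at hvS
      have hd0 : ε ≤ dist u₀ (v ∘ ⇑σ) := hvS σ
      rw [← hσ, dist_self] at hd0
      linarith
    obtain ⟨δ, hδpos, hδ1, hδS⟩ :
        ∃ δ : ℝ, 0 < δ ∧ δ ≤ 1 ∧ ∀ v ∈ S, δ ≤ dpo n p (∏ j, (X - C (v j))) := by
      rcases Set.eq_empty_or_nonempty S with hemp | hne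
      · exact ⟨1, one_pos, le_refl 1, by simp [hemp]⟩
      · obtain ⟨v₀, hv₀S, hmin⟩ := hSc.exists_isMinOn hne hfc.continuousOn
        exact ⟨min (dpo n p (∏ j, (X - C (v₀ j)))) 1,
          lt_min (hfpos v₀ hv₀S) one_pos, min_le_right _ _,
          fun v hv => le_trans (min_le_left _ _) (isMinOn_iff.mp hmin v hv)⟩
    refine ⟨δ, hδpos, ?_⟩
    intro q hq hdq hdpo u v hu hv
    have hqΦ : q = ∏ j, (X - C (v j)) := by
      rw [prod_eq_multiset, hv]
      exact (IsAlgClosed.splits q).eq_prod_roots_of_monic hq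
    have hfv : dpo n p (∏ j, (X - C (v j))) < δ := by rw [← hqΦ]; exact hdpo
    have hcoeffb : ∀ j : Fin n, ‖q.coeff j‖ ≤ ‖p.coeff j‖ + 1 := by
      intro j
      have h2 : ‖p.coeff j - q.coeff j‖ ≤ 1 :=
        (dpo_coeff_le n hn p q j).trans (hdpo.le.trans hδ1)
      have h3 : ‖q.coeff j‖ - ‖p.coeff j‖ ≤ ‖q.coeff j - p.coeff j‖ := norm_sub_norm_le _ _
      rw [norm_sub_rev] at h3
      linarith
    have hvK : v ∈ K := by
      rw [hK, Set.mem_univ_pi]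
      intro j
      have hvj : q.eval (v j) = 0 := by
        have hmem : v j ∈ q.roots := by
          rw [← hv]
          exact Multiset.mem_coe.mpr ((List.mem_ofFn (f := v) (a := v j)).mpr ⟨j, rfl⟩)
        exact (mem_roots hq.ne_zero).mp hmem
      have hb := root_bound hn hq hdq hvj
      have hsum : ∑ i : Fin n, ‖q.coeff i‖ ≤ A + n := by
        calc ∑ i : Fin n, ‖q.coeff i‖
            ≤ ∑ i : Fin n, (‖p.coeff i‖ + 1) :=
              Finset.sum_le_sum fun i _ => hcoeffb i
          _ = A + n := by rw [Finset.sum_add_distrib]; simp [hA]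
      rw [Metric.mem_closedBall, dist_zero_right]
      calc ‖v j‖ ≤ 1 + ∑ i : Fin n, ‖q.coeff i‖ := hb
        _ ≤ 1 + (A + n) := by linarith
        _ = R := by rw [hR]; ring
    by_contra hcon
    push_neg at hcon
    have hvS : v ∈ S := by
      refine ⟨hvK, ?_⟩
      rw [Set.mem_iInter]
      intro σ
      have hperm : (↑(List.ofFn u₀) : Multiset ℂ) = ↑(List.ofFn u) := by rw [hu₀, hu]
      obtain ⟨ρ, hρ⟩ := exists_eq_comp_perm u₀ u (Multiset.coe_eq_coe.mp hperm)
      have hle : dF u v ≤ dist u (v ∘ (ρ.symm.trans σ)) := dF_le u v _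
      have heqd : dist u (v ∘ (ρ.symm.trans σ)) = dist u₀ (v ∘ σ) := by
        have e1 : ((u ∘ ⇑ρ) ∘ ⇑ρ.symm) = u := by funext i; simp
        have e2 : ((v ∘ ⇑σ) ∘ ⇑ρ.symm) = v ∘ ⇑(ρ.symm.trans σ) := by
          funext i; simp [Equiv.trans_apply]
        rw [hρ, ← dist_comp_perm (u ∘ ⇑ρ) (v ∘ ⇑σ) ρ.symm, e1, e2]
      show ε ≤ dist u₀ (v ∘ σ)
      rw [← heqd]
      exact le_trans hcon hle
    exact absurd (hδS v hvS) (not_le.mpr hfv)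
  · -- Part 3: continuity of the inverse
    intro u ε hε
    have hgcont : Continuous fun v : Fin n → ℂ => fun j : Fin n =>
        (∏ i, (X - C (v i))).coeff j :=
      continuous_pi fun j => contCoeff Finset.univ (j : ℕ)
    have hat := hgcont.continuousAt (x := u)
    rw [Metric.continuousAt_iff] at hat
    obtain ⟨δ, hδ, hball⟩ := hat ε hε
    refine ⟨δ, hδ, fun v hdF => ?_⟩
    obtain ⟨σ, hσ⟩ := dF_lt_exists hdF
    have hprod : (∏ j, (X - C (v j))) = ∏ j, (X - C ((v ∘ σ) j)) :=
      (Equiv.prod_comp σ fun j => X - C (v j)).symm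
    have hd2 : dist (fun j : Fin n => (∏ i, (X - C ((v ∘ σ) i))).coeff j)
        (fun j : Fin n => (∏ i, (X - C (u i))).coeff j) < ε :=
      hball (by rwa [dist_comm] at hσ)
    rw [hprod]
    refine lt_of_le_of_lt (dpo_le_of_forall hn fun j => ?_) hd2
    have heq1 : ‖(∏ i, (X - C (u i))).coeff j - (∏ i, (X - C ((v ∘ σ) i))).coeff j‖
        = dist ((∏ i, (X - C ((v ∘ σ) i))).coeff j) ((∏ i, (X - C (u i))).coeff j) := by
      rw [Complex.dist_eq]
      exact (norm_sub_rev _ _)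
    rw [heq1]
    exact dist_le_pi_dist (fun j : Fin n => (∏ i, (X - C ((v ∘ σ) i))).coeff j)
      (fun j : Fin n => (∏ i, (X - C (u i))).coeff j) j
end

section
/- Let K ⊆ ℂⁿ be a set of representatives: for each n-element complex multiset V, K contains exactly one n-tuple whose multiset of coordinates equals V. Let K : Z_n → ℂⁿ be the resulting section of the quotient map P. Then K is continuous (from (Z_n, d_F) to (ℂⁿ, d∞)) if and only if its range K is closed in ℂⁿ. -/
open Polynomial

/-- Let `𝒦 ⊆ ℂⁿ` contain exactly one representative of each `n`-element multiset,
and let `K` be the induced section of the quotient map (so `K u` is the unique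
element of `𝒦` that is a permutation of `u`).  Then `K : Z_n → ℂⁿ` is continuous
(w.r.t. `d_F` and the sup metric) iff `𝒦` is closed in `ℂⁿ`. -/
theorem stmt15 (n : ℕ) (𝒦 : Set (Fin n → ℂ)) (K : (Fin n → ℂ) → (Fin n → ℂ))
    (hrep : ∀ u : Fin n → ℂ, ∃! v, v ∈ 𝒦 ∧ ∃ σ : Equiv.Perm (Fin n), v = u ∘ σ)
    (hK : ∀ u : Fin n → ℂ, K u ∈ 𝒦 ∧ ∃ σ : Equiv.Perm (Fin n), K u = u ∘ σ) :
    (∀ u : Fin n → ℂ, ∀ ε > (0:ℝ), ∃ δ > (0:ℝ), ∀ v : Fin n → ℂ,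
      dF u v < δ → dist (K u) (K v) < ε) ↔ IsClosed 𝒦 := by
  -- K fixes elements of 𝒦
  have hfix : ∀ u ∈ 𝒦, K u = u := by
    intro u hu
    exact (hrep u).unique ⟨(hK u).1, (hK u).2⟩ ⟨hu, 1, by ext i; simp⟩
  -- K is invariant under permutation of its argument
  have hinv : ∀ (u : Fin n → ℂ) (σ : Equiv.Perm (Fin n)), K (u ∘ ⇑σ) = K u := by
    intro u σ
    obtain ⟨τ, hτ⟩ := (hK (u ∘ ⇑σ)).2
    refine (hrep u).unique ⟨(hK (u ∘ ⇑σ)).1, τ.trans σ, ?_⟩ ⟨(hK u).1, (hK u).2⟩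
    rw [hτ]; ext i; simp
  -- permuting coordinates does not increase the sup distance
  have hperm : ∀ (u w : Fin n → ℂ) (σ : Equiv.Perm (Fin n)),
      dist (u ∘ ⇑σ) (w ∘ ⇑σ) ≤ dist u w := by
    intro u w σ
    rw [dist_pi_le_iff dist_nonneg]
    intro i
    exact dist_le_pi_dist u w (σ i)
  constructor
  · -- continuity → closed
    intro hcont
    refine isClosed_of_closure_subset fun u hu => ?_
    by_contra hnot
    have hne : K u ≠ u := fun h => hnot (h ▸ (hK u).1)
    have hc : (0:ℝ) < dist u (K u) := by
      rw [dist_pos]; exact fun h => hne h.symm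
    obtain ⟨δ, hδ, hδ'⟩ := hcont u (dist u (K u) / 2) (by linarith)
    obtain ⟨v, hv𝒦, hv⟩ := Metric.mem_closure_iff.mp hu (min δ (dist u (K u) / 2))
      (lt_min hδ (by linarith))
    have hdF : dF u v < δ := by
      have h1 : dF u v ≤ dist u v := by
        have hv1 : v ∘ ⇑(1 : Equiv.Perm (Fin n)) = v := by ext i; simp
        calc dF u v ≤ dist u (v ∘ ⇑(1 : Equiv.Perm (Fin n))) :=
              ciInf_le ⟨0, fun x ⟨σ, hσ⟩ => hσ ▸ dist_nonneg⟩ 1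
          _ = dist u v := by rw [hv1]
      exact lt_of_le_of_lt h1 (lt_of_lt_of_le hv (min_le_left _ _))
    have h2 := hδ' v hdF
    rw [hfix v hv𝒦] at h2
    have h3 : dist u (K u) ≤ dist u v + dist v (K u) := dist_triangle _ _ _
    have h4 : dist v (K u) = dist (K u) v := dist_comm _ _
    have h5 : dist u v < dist u (K u) / 2 := lt_of_lt_of_le hv (min_le_right _ _)
    linarith
  · -- closed → continuity
    intro hcl u ε hε
    have hchoice : ∀ τ : Equiv.Perm (Fin n), ∃ d > (0:ℝ), ∀ w : Fin n → ℂ,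
        dist u w < d → w ∘ ⇑τ ∈ 𝒦 → u ∘ ⇑τ ∈ 𝒦 := by
      intro τ
      by_cases h : u ∘ ⇑τ ∈ 𝒦
      · exact ⟨1, one_pos, fun _ _ _ => h⟩
      · obtain ⟨d, hd, hball⟩ := Metric.isOpen_iff.mp hcl.isOpen_compl (u ∘ ⇑τ) h
        refine ⟨d, hd, fun w hw hwτ => absurd hwτ ?_⟩
        have hlt : dist (w ∘ ⇑τ) (u ∘ ⇑τ) < d := by
          calc dist (w ∘ ⇑τ) (u ∘ ⇑τ) ≤ dist w u := hperm w u τ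
            _ = dist u w := dist_comm _ _
            _ < d := hw
        exact hball (Metric.mem_ball.mpr hlt)
    choose d hd hD using hchoice
    haveI : Nonempty (Equiv.Perm (Fin n)) := ⟨1⟩
    set δ := min ε (Finset.univ.inf' Finset.univ_nonempty d) with hδdef
    have hδpos : 0 < δ := by
      refine lt_min hε ?_
      rw [Finset.lt_inf'_iff]
      exact fun τ _ => hd τ
    refine ⟨δ, hδpos, fun v hdF => ?_⟩
    unfold dF at hdF
    obtain ⟨σ, hσ⟩ := exists_lt_of_ciInf_lt hdF
    set w := v ∘ ⇑σ with hwdef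
    have hKv : K v = K w := (hinv v σ).symm
    obtain ⟨τ, hτ⟩ := (hK w).2
    have h1 : dist u w < d τ :=
      lt_of_lt_of_le hσ (le_trans (min_le_right _ _)
        (Finset.inf'_le _ (Finset.mem_univ τ)))
    have huτ : u ∘ ⇑τ ∈ 𝒦 := hD τ w h1 (hτ ▸ (hK w).1)
    have hKu : u ∘ ⇑τ = K u :=
      (hrep u).unique ⟨huτ, τ, rfl⟩ ⟨(hK u).1, (hK u).2⟩
    calc dist (K u) (K v) = dist (u ∘ ⇑τ) (w ∘ ⇑τ) := by rw [hKv, hτ, hKu]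
      _ ≤ dist u w := hperm u w τ
      _ < δ := hσ
      _ ≤ ε := min_le_left _ _
end

section
/- For n ≥ 2, no set of representatives K ⊆ ℂⁿ (containing exactly one n-tuple from each fiber of the quotient map P : ℂⁿ → Z_n) is closed in ℂⁿ. -/
open Polynomial

noncomputable def et (t : ℝ) : ℂ := Complex.exp (t * Complex.I)

lemma et_ne_zero (t : ℝ) : et t ≠ 0 := Complex.exp_ne_zero _

lemma et_ne_neg (t : ℝ) : et t ≠ -et t := fun h => et_ne_zero t (by linear_combination h / 2)

lemma et_add_pi (t : ℝ) : et (t + Real.pi) = -et t := by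
  unfold et
  push_cast
  rw [add_mul, Complex.exp_add, Complex.exp_pi_mul_I]
  ring

lemma continuous_et : Continuous et :=
  (Complex.continuous_ofReal.mul continuous_const).cexp

noncomputable def Vt (n : ℕ) (i j : Fin n) (t : ℝ) : Fin n → ℂ :=
  fun k => if k = i then et t else if k = j then -et t else 0

lemma continuous_Vt (n : ℕ) (i j : Fin n) : Continuous (fun t => Vt n i j t) := by
  apply continuous_pi
  intro k
  unfold Vt
  split_ifs
  · exact continuous_et
  · exact continuous_et.neg
  · exact continuous_const

lemma Vt_comp_perm (n : ℕ) (i j i' j' : Fin n) (hij : i ≠ j) (hij' : i' ≠ j') (t : ℝ) :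
    ∃ σ : Equiv.Perm (Fin n), Vt n i j t = Vt n i' j' t ∘ σ := by
  classical
  set a : Equiv.Perm (Fin n) := Equiv.swap i i' with ha
  set b : Equiv.Perm (Fin n) := Equiv.swap (a j) j' with hb
  have haj : a j ≠ i' := by
    intro h
    have : a j = a i := by rw [h, ha, Equiv.swap_apply_left]
    exact hij.symm (a.injective this)
  refine ⟨a.trans b, funext fun k => ?_⟩
  have hσi : (a.trans b) i = i' := by
    simp only [Equiv.trans_apply, ha, Equiv.swap_apply_left]
    exact Equiv.swap_apply_of_ne_of_ne haj.symm hij'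
  have hσj : (a.trans b) j = j' := by
    simp only [Equiv.trans_apply, hb, Equiv.swap_apply_left]
  by_cases hki : k = i
  · subst hki
    simp [Vt, Function.comp, hσi]
  · by_cases hkj : k = j
    · subst hkj
      simp [Vt, Function.comp, hσj, hij'.symm, hij, Ne.symm hij]
    · have h1 : (a.trans b) k ≠ i' := fun h => hki ((a.trans b).injective (h.trans hσi.symm))
      have h2 : (a.trans b) k ≠ j' := fun h => hkj ((a.trans b).injective (h.trans hσj.symm))
      simp only [Equiv.trans_apply] at h1 h2
      simp [Vt, Function.comp, hki, hkj, h1, h2]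

/-- For `n ≥ 2`, no set of representatives `𝒦 ⊆ ℂⁿ` (containing exactly one tuple
from each fiber of the quotient map onto `n`-element multisets) is closed in `ℂⁿ`. -/
theorem stmt16 (n : ℕ) (hn : 2 ≤ n) (𝒦 : Set (Fin n → ℂ))
    (hrep : ∀ u : Fin n → ℂ, ∃! v, v ∈ 𝒦 ∧ ∃ σ : Equiv.Perm (Fin n), v = u ∘ σ) :
    ¬ IsClosed 𝒦 := by
  classical
  intro hclosed
  have h0 : (0:ℕ) < n := by omega
  have h1 : (1:ℕ) < n := by omega
  set i0 : Fin n := ⟨0, h0⟩ with hi0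
  set i1 : Fin n := ⟨1, h1⟩ with hi1
  have h01 : i0 ≠ i1 := by simp [hi0, hi1, Fin.ext_iff]
  set u : ℝ → Fin n → ℂ := fun t => Vt n i0 i1 t with hu
  set w : ℝ → Fin n → ℂ := fun t => (hrep (u t)).choose with hwdef
  have hwK : ∀ t, w t ∈ 𝒦 := fun t => (hrep (u t)).choose_spec.1.1
  have hwperm : ∀ t, ∃ σ : Equiv.Perm (Fin n), w t = u t ∘ σ :=
    fun t => (hrep (u t)).choose_spec.1.2
  have hwuniq : ∀ t v, v ∈ 𝒦 → (∃ σ : Equiv.Perm (Fin n), v = u t ∘ σ) → v = w t :=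
    fun t v hv hσ => (hrep (u t)).choose_spec.2 v ⟨hv, hσ⟩
  set B : Fin n × Fin n → Set ℝ := fun p => {t | w t = Vt n p.1 p.2 t} with hB
  -- membership in `B (i, j)` forces `i ≠ j`
  have hne : ∀ i j t, t ∈ B (i, j) → i ≠ j := by
    intro i j t ht hij
    subst hij
    have ht' : w t = Vt n i i t := ht
    obtain ⟨σ, hσ⟩ := hwperm t
    have hval : w t (σ.symm i1) = -et t := by
      rw [hσ]
      simp [hu, Vt, Ne.symm h01]
    rw [ht'] at hval
    simp only [Vt] at hval
    split_ifs at hval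
    · exact et_ne_neg t hval
    · exact et_ne_zero t (neg_eq_zero.mp hval.symm)
  -- each `B p` is closed
  have hclosedB : ∀ p, IsClosed (B p) := by
    intro ⟨i, j⟩
    by_cases hij : i = j
    · have : B (i, j) = ∅ := by
        ext t
        simp only [Set.mem_empty_iff_false, iff_false]
        exact fun ht => hne i j t ht hij
      rw [this]; exact isClosed_empty
    · have : B (i, j) = (fun t => Vt n i j t) ⁻¹' 𝒦 := by
        ext t
        constructor
        · intro ht
          have ht' : w t = Vt n i j t := ht
          have := hwK t
          rw [ht'] at this
          exact this
        · intro ht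
          obtain ⟨σ, hσ⟩ := Vt_comp_perm n i j i0 i1 hij h01 t
          exact ((hwuniq t _ ht ⟨σ, hσ⟩).symm : w t = Vt n i j t)
      rw [this]
      exact hclosed.preimage (continuous_Vt n i j)
  -- the sets `B p` cover `ℝ`
  have hcover : ∀ t, ∃ p, t ∈ B p := by
    intro t
    obtain ⟨σ, hσ⟩ := hwperm t
    refine ⟨(σ.symm i0, σ.symm i1), ?_⟩
    show w t = Vt n (σ.symm i0) (σ.symm i1) t
    funext k
    rw [hσ]
    simp only [Function.comp, hu, Vt, Equiv.eq_symm_apply]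
  -- the sets `B p` are pairwise disjoint
  have hdisj : ∀ i j i' j' t, t ∈ B (i, j) → t ∈ B (i', j') → i = i' ∧ j = j' := by
    intro i j i' j' t h h'
    have hij := hne i j t h
    have hij' := hne i' j' t h'
    have h2 : w t = Vt n i j t := h
    have h2' : w t = Vt n i' j' t := h'
    have hV : Vt n i j t = Vt n i' j' t := by rw [← h2, ← h2']
    have hii : i = i' := by
      by_contra hne2
      have := congrFun hV i
      simp [Vt, hne2] at this
      split_ifs at this
      · exact et_ne_neg t this
      · exact et_ne_zero t this
    subst hii
    have hjj : j = j' := by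
      by_contra hne2
      have := congrFun hV j
      simp [Vt, Ne.symm hij, Ne.symm hij', hne2] at this
      exact et_ne_zero t this
    exact ⟨rfl, hjj⟩
  -- shifting by π swaps the indices
  have hshift : ∀ i j t, t ∈ B (i, j) → (t + Real.pi) ∈ B (j, i) := by
    intro i j t ht
    have hij := hne i j t ht
    have ht' : w t = Vt n i j t := ht
    obtain ⟨σ, hσ⟩ := hwperm t
    have hu' : u t = u (t + Real.pi) ∘ (Equiv.swap i0 i1) := by
      funext k
      simp only [hu, Function.comp]
      by_cases hk0 : k = i0
      · subst hk0; simp [Vt, Equiv.swap_apply_left, Ne.symm h01, et_add_pi]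
      · by_cases hk1 : k = i1
        · subst hk1
          rw [Equiv.swap_apply_right]
          simp [Vt, h01, Ne.symm h01, et_add_pi]
        · rw [Equiv.swap_apply_of_ne_of_ne hk0 hk1]
          simp [Vt, hk0, hk1]
    have hww : w t = w (t + Real.pi) := by
      apply hwuniq (t + Real.pi) (w t) (hwK t)
      refine ⟨σ.trans (Equiv.swap i0 i1), ?_⟩
      rw [hσ, hu', Equiv.coe_trans]
      rfl
    show w (t + Real.pi) = Vt n j i (t + Real.pi)
    rw [← hww, ht']
    funext k
    simp only [Vt, et_add_pi]
    by_cases hki : k = i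
    · subst hki; simp [hij, Ne.symm hij]
    · by_cases hkj : k = j
      · subst hkj; simp [hki]
      · simp [hki, hkj]
  -- connectedness argument
  obtain ⟨p₀, hp₀⟩ := hcover 0
  have hopen : IsOpen (B p₀) := by
    rw [← isClosed_compl_iff]
    have hc : (B p₀)ᶜ = ⋃ p ∈ {p | p ≠ p₀}, B p := by
      ext t
      simp only [Set.mem_compl_iff, Set.mem_iUnion, Set.mem_setOf_eq, exists_prop]
      constructor
      · intro ht
        obtain ⟨p, hp⟩ := hcover t
        exact ⟨p, fun h => ht (h ▸ hp), hp⟩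
      · rintro ⟨p, hpne, hp⟩ hp₀'
        apply hpne
        obtain ⟨hh1, hh2⟩ := hdisj p.1 p.2 p₀.1 p₀.2 t hp hp₀'
        exact Prod.ext hh1 hh2
    rw [hc]
    exact Set.Finite.isClosed_biUnion (Set.toFinite _) (fun p _ => hclosedB p)
  have hclopen : IsClopen (B p₀) := ⟨hclosedB p₀, hopen⟩
  have huniv : B p₀ = Set.univ := hclopen.eq_univ ⟨0, hp₀⟩
  have hπ0 : (0:ℝ) ∈ B (p₀.1, p₀.2) := hp₀
  have hπ : (0 + Real.pi) ∈ B (p₀.2, p₀.1) := hshift p₀.1 p₀.2 0 hπ0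
  have hπ' : (0 + Real.pi) ∈ B (p₀.1, p₀.2) := by
    show (0 + Real.pi) ∈ B p₀
    rw [huniv]; trivial
  exact hne p₀.1 p₀.2 0 hπ0 (hdisj p₀.2 p₀.1 p₀.1 p₀.2 _ hπ hπ').1.symm
end

section
/- For n ≥ 2, there exists no continuous map K : Z_n → ℂⁿ that is a section of the quotient map P : ℂⁿ → Z_n, i.e., no continuous K with P ∘ K = id on Z_n. -/
open Polynomial

/-- For `n ≥ 2`, there is no continuous section `K : Z_n → ℂⁿ` of the quotient map
`P : ℂⁿ → Z_n`: no map, well defined on multisets, choosing for each multiset a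
tuple of its elements, is continuous from `(Z_n, d_F)` to `(ℂⁿ, d∞)`. -/
theorem stmt17 (n : ℕ) (hn : 2 ≤ n) :
    ¬ ∃ K : (Fin n → ℂ) → (Fin n → ℂ),
      (∀ u : Fin n → ℂ, ∀ σ : Equiv.Perm (Fin n), K (u ∘ σ) = K u) ∧
      (∀ u : Fin n → ℂ, ∃ σ : Equiv.Perm (Fin n), K u = u ∘ σ) ∧
      (∀ u : Fin n → ℂ, ∀ ε > (0:ℝ), ∃ δ > (0:ℝ), ∀ v : Fin n → ℂ,
        dF u v < δ → dist (K u) (K v) < ε) := by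
  rintro ⟨K, hinv, hperm, hcont⟩
  have h0 : 0 < n := by omega
  have h1 : 1 < n := hn
  set a : Fin n := ⟨0, h0⟩ with ha
  set b : Fin n := ⟨1, h1⟩ with hb
  have hab : a ≠ b := by simp [ha, hb, Fin.ext_iff]
  -- the path of tuples
  set w : ℝ → Fin n → ℂ := fun t j =>
    if j = a then Complex.exp (t * Complex.I)
    else if j = b then -Complex.exp (t * Complex.I)
    else ((j : ℕ) + 1 : ℂ) with hw
  -- continuity of w
  have hwcont : Continuous (fun t => w t) := by
    apply continuous_pi
    intro j
    by_cases hja : j = a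
    · simp only [hw, hja, if_pos rfl]
      exact Complex.continuous_exp.comp (by fun_prop)
    · by_cases hjb : j = b
      · simp only [hw, if_neg hja, hjb, if_pos rfl]
        exact (Complex.continuous_exp.comp (by fun_prop)).neg
      · simp only [hw, if_neg hja, if_neg hjb]
        exact continuous_const
  -- dF is at most dist
  have dF_le : ∀ u v : Fin n → ℂ, dF u v ≤ dist u v := by
    intro u v
    have hbd : BddBelow (Set.range fun σ : Equiv.Perm (Fin n) => dist u (v ∘ σ)) := by
      refine ⟨0, ?_⟩
      rintro r ⟨σ, rfl⟩
      exact dist_nonneg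
    have := ciInf_le hbd (1 : Equiv.Perm (Fin n))
    simpa [dF] using this
  -- continuity of K ∘ w
  have hg : Continuous (fun t => K (w t)) := by
    rw [Metric.continuous_iff]
    intro t ε hε
    obtain ⟨δ', hδ', hδ'2⟩ := hcont (w t) ε hε
    obtain ⟨δ, hδ, hd⟩ := Metric.continuous_iff.mp hwcont t δ' hδ'
    refine ⟨δ, hδ, fun s hs => ?_⟩
    have h1 : dF (w t) (w s) < δ' :=
      lt_of_le_of_lt (dF_le _ _) (by rw [dist_comm]; exact hd s hs)
    have := hδ'2 (w s) h1
    rwa [dist_comm]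
  -- moduli of the entries of w t
  have hWmod : ∀ (t : ℝ) (k : Fin n),
      ‖w t k‖ = 1 ∨ 3 ≤ ‖w t k‖ := by
    intro t k
    by_cases hka : k = a
    · left; simp [hw, hka, Complex.norm_exp]
    · by_cases hkb : k = b
      · left; simp [hw, if_neg hka, hkb, if_neg (Ne.symm hab), Complex.norm_exp]
      · right
        have hk2 : 2 ≤ (k : ℕ) := by
          rcases Nat.lt_or_ge (k : ℕ) 2 with h | h
          · interval_cases hkv : (k : ℕ)
            · exact absurd (Fin.ext hkv) hka
            · exact absurd (Fin.ext hkv) hkb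
          · exact h
        have : ((k : ℕ) : ℂ) + 1 = (((k : ℕ) + 1 : ℕ) : ℂ) := by push_cast; ring
        simp only [hw, if_neg hka, if_neg hkb, this, Complex.norm_natCast]
        exact_mod_cast Nat.succ_le_succ hk2
  have hWval : ∀ (t : ℝ) (k : Fin n), ‖w t k‖ = 1 →
      w t k = Complex.exp (t * Complex.I) ∨ w t k = -Complex.exp (t * Complex.I) := by
    intro t k habs
    by_cases hka : k = a
    · left; simp [hw, hka]
    · by_cases hkb : k = b
      · right; simp [hw, if_neg hka, hkb, if_neg (Ne.symm hab)]
      · exfalso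
        rcases hWmod t k with h | h
        · -- this branch can't distinguish; redo directly
          have : ‖w t k‖ = 1 := habs
          -- compute modulus directly
          have hk2 : 2 ≤ (k : ℕ) := by
            rcases Nat.lt_or_ge (k : ℕ) 2 with h' | h'
            · interval_cases hkv : (k : ℕ)
              · exact absurd (Fin.ext hkv) hka
              · exact absurd (Fin.ext hkv) hkb
            · exact h'
          have hcast : ((k : ℕ) : ℂ) + 1 = (((k : ℕ) + 1 : ℕ) : ℂ) := by push_cast; ring
          have : ‖w t k‖ = ((k : ℕ) + 1 : ℕ) := by
            simp only [hw, if_neg hka, if_neg hkb, hcast, Complex.norm_natCast]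
          rw [habs] at this
          have : (1 : ℝ) = ((k : ℕ) + 1 : ℕ) := this
          have h3 : (3 : ℝ) ≤ ((k : ℕ) + 1 : ℕ) := by exact_mod_cast Nat.succ_le_succ hk2
          linarith
        · linarith [habs ▸ h]
  -- a particular index j with K (w 0) j = 1
  obtain ⟨σ0, hσ0⟩ := hperm (w 0)
  set j : Fin n := σ0⁻¹ a with hj
  have hc0 : K (w 0) j = 1 := by
    rw [hσ0]
    show w 0 (σ0 (σ0⁻¹ a)) = 1
    simp [hw]
  -- each value of the selection is an entry of w t
  have hck : ∀ t : ℝ, ∃ k, K (w t) j = w t k := by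
    intro t
    obtain ⟨σ, hσ⟩ := hperm (w t)
    exact ⟨σ j, by rw [hσ]; rfl⟩
  set c : ℝ → ℂ := fun t => K (w t) j with hcdef
  have hccont : Continuous c := (continuous_apply j).comp hg
  have hAcont : Continuous fun t => ‖c t‖ := continuous_norm.comp hccont
  have hA0 : ‖c 0‖ = 1 := by rw [hcdef]; simp [hc0]
  have hAall : ∀ t : ℝ, ‖c t‖ = 1 ∨ 3 ≤ ‖c t‖ := by
    intro t
    obtain ⟨k, hk⟩ := hck t
    rw [hcdef]
    simp only
    rw [hk]
    exact hWmod t k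
  -- modulus stays 1 on [0, π]
  have hA1 : ∀ t ∈ Set.Icc (0:ℝ) Real.pi, ‖c t‖ = 1 := by
    intro t ht
    rcases hAall t with h | h
    · exact h
    · exfalso
      have hsub := intermediate_value_Icc ht.1 (hAcont.continuousOn (s := Set.Icc 0 t))
      have h2 : (2:ℝ) ∈ Set.Icc (‖c 0‖) (‖c t‖) := by
        rw [hA0]; constructor <;> linarith
      obtain ⟨s, _, hs⟩ := hsub h2
      rcases hAall s with h' | h' <;> linarith [show ‖c s‖ = 2 from hs]
  -- the values on the circle
  have hcval : ∀ t ∈ Set.Icc (0:ℝ) Real.pi,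
      c t = Complex.exp (t * Complex.I) ∨ c t = -Complex.exp (t * Complex.I) := by
    intro t ht
    obtain ⟨k, hk⟩ := hck t
    have : ‖w t k‖ = 1 := by rw [← hk]; exact hA1 t ht
    have := hWval t k this
    rw [hcdef]; simp only; rw [hk]; exact this
  -- endpoint identification: w π = w 0 ∘ swap a b
  have hwpi : w Real.pi = w 0 ∘ (Equiv.swap a b) := by
    funext k
    by_cases hka : k = a
    · subst hka
      simp [hw, Function.comp, Equiv.swap_apply_left, hab, hab.symm, Complex.exp_pi_mul_I]
    · by_cases hkb : k = b
      · subst hkb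
        simp [hw, Function.comp, Equiv.swap_apply_right, hab, hab.symm, Complex.exp_pi_mul_I]
      · simp [hw, Function.comp, Equiv.swap_apply_of_ne_of_ne hka hkb, if_neg hka, if_neg hkb]
  have hcpi : c Real.pi = 1 := by
    rw [hcdef]
    simp only
    rw [hwpi, hinv (w 0) (Equiv.swap a b)]
    exact hc0
  -- the winding function
  set f : ℝ → ℝ := fun t => (c t * Complex.exp (-(t * Complex.I))).re with hf
  have hfcont : Continuous f := by
    apply Complex.continuous_re.comp
    exact hccont.mul (Complex.continuous_exp.comp (by fun_prop))
  have hf0 : f 0 = 1 := by simp [hf, hcdef, hc0]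
  have hfpi : f Real.pi = -1 := by
    simp [hf, hcpi, Complex.exp_neg, Complex.exp_pi_mul_I]
  have hfval : ∀ t ∈ Set.Icc (0:ℝ) Real.pi, f t = 1 ∨ f t = -1 := by
    intro t ht
    rcases hcval t ht with h | h
    · left
      simp only [hf, h, ← Complex.exp_add]
      norm_num
    · right
      simp only [hf, h, neg_mul, ← Complex.exp_add]
      norm_num
  have hsub := intermediate_value_Icc' Real.pi_nonneg
    (hfcont.continuousOn (s := Set.Icc 0 Real.pi))
  have h0mem : (0:ℝ) ∈ Set.Icc (f Real.pi) (f 0) := by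
    rw [hf0, hfpi]; constructor <;> linarith
  obtain ⟨t, ht, hft⟩ := hsub h0mem
  rcases hfval t ht with h | h <;> rw [hft] at h <;> linarith
end
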